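/- Suppose the MDP satisfies Assumption 1 with constants τ_t and τ_r. If Simplex-PI moves in one step from a non-optimal policy π to a policy π', and π' has a recurrent class that is not a recurrent class of π, then 1ᵀ(v_* − v_{π'}) ≤ (1 − 1/τ_r) · 1ᵀ(v_* − v_π). -/
import Mathlib


open Matrix BigOperators

/-- A finite discounted MDP with `n ≥ 1` states and `m ≥ 2` actions:
transition probabilities `p i a j`, rewards `r i a j`, discount factor `γ ∈ (0,1)`. -/
structure MDP (n m : ℕ) : Type where
  n_pos : 1 ≤ n
  m_ge_two : 2 ≤ m
  p : Fin n → Fin m → Fin n → ℝ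
  r : Fin n → Fin m → Fin n → ℝ
  γ : ℝ
  p_nonneg : ∀ i a j, 0 ≤ p i a j
  p_sum : ∀ i a, ∑ j, p i a j = 1
  γ_pos : 0 < γ
  γ_lt_one : γ < 1

/-- A (stationary deterministic) policy. -/
abbrev MDP.Policy (n m : ℕ) : Type := Fin n → Fin m

namespace MDP

variable {n m : ℕ}

/-- The row-stochastic transition matrix `P_π` of a policy. -/
def P (M : MDP n m) (π : Policy n m) : Matrix (Fin n) (Fin n) ℝ :=
  Matrix.of fun i j => M.p i (π i) j

/-- The expected reward vector `r_π` of a policy. -/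
def rPol (M : MDP n m) (π : Policy n m) : Fin n → ℝ :=
  fun i => ∑ j, M.p i (π i) j * M.r i (π i) j

/-- The Bellman operator `T_π v = r_π + γ P_π v` of a policy. -/
def Tpol (M : MDP n m) (π : Policy n m) (v : Fin n → ℝ) : Fin n → ℝ :=
  fun i => M.rPol π i + M.γ * (M.P π *ᵥ v) i

/-- `IsValue M V` asserts that, for every policy `π`, `V π` is the value function `v_π`,
i.e. the (unique) solution of the Bellman equation `v_π = T_π v_π`. -/
def IsValue (M : MDP n m) (V : Policy n m → Fin n → ℝ) : Prop :=
  ∀ π, V π = M.Tpol π (V π)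

/-- The optimal Bellman operator `T v = max_π T_π v` (componentwise maximum). -/
noncomputable def T (M : MDP n m) (v : Fin n → ℝ) : Fin n → ℝ :=
  fun i => ⨆ π : Policy n m, M.Tpol π v i

/-- The optimal value function `v_*`, the componentwise maximum of `v_π` over policies. -/
noncomputable def vStar (M : MDP n m) (V : Policy n m → Fin n → ℝ) : Fin n → ℝ :=
  fun i => ⨆ π : Policy n m, V π i

/-- A policy is optimal when its value equals `v_*`. -/
def IsOptimal (M : MDP n m) (V : Policy n m → Fin n → ℝ) (π : Policy n m) : Prop :=
  V π = M.vStar V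

/-- `π'` is greedy with respect to `v_π`: `T_{π'} v_π = T v_π`.  One step of Howard's PI
from a non-optimal `π` moves to such a `π'`. -/
def Greedy (M : MDP n m) (V : Policy n m → Fin n → ℝ) (π π' : Policy n m) : Prop :=
  M.Tpol π' (V π) = M.T (V π)

/-- One step of Simplex-PI: `π'` agrees with `π` except at a single state `s` maximizing
the advantage `a_π(i) = (T v_π - v_π)(i)`, where `π'(s)` achieves `T v_π(s)`. -/
def SimplexStep (M : MDP n m) (V : Policy n m → Fin n → ℝ) (π π' : Policy n m) : Prop :=
  ∃ s : Fin n, (∀ i, i ≠ s → π' i = π i) ∧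
    (∀ i, M.T (V π) i - V π i ≤ M.T (V π) s - V π s) ∧
    M.Tpol π' (V π) s = M.T (V π) s

/-- The vector `x_π = (I - γ P_πᵀ)⁻¹ 1`. -/
noncomputable def xPol (M : MDP n m) (π : Policy n m) : Fin n → ℝ :=
  ((1 : Matrix (Fin n) (Fin n) ℝ) - M.γ • (M.P π)ᵀ)⁻¹ *ᵥ (fun _ => (1 : ℝ))

/-- `R` is a recurrent class of `π`: nonempty, closed under positive-probability
transitions of `P_π`, and every state of `R` is reachable from every other state of `R`
along positive-probability transitions.  (For a deterministic MDP this is the notion of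
a cycle of `π`.) -/
def IsRecClass (M : MDP n m) (π : Policy n m) (R : Set (Fin n)) : Prop :=
  R.Nonempty ∧ (∀ i ∈ R, ∀ j, 0 < M.P π i j → j ∈ R) ∧
    ∀ i ∈ R, ∀ j ∈ R, Relation.ReflTransGen (fun a b => 0 < M.P π a b) i j

/-- A state is recurrent for `π` if it belongs to some recurrent class of `π`. -/
def Recurrent (M : MDP n m) (π : Policy n m) (i : Fin n) : Prop :=
  ∃ R : Set (Fin n), M.IsRecClass π R ∧ i ∈ R

/-- A state is transient for `π` if it is not recurrent for `π`. -/
def Transient (M : MDP n m) (π : Policy n m) (i : Fin n) : Prop :=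
  ¬ M.Recurrent π i

/-- Assumption 1: `τ_t, τ_r ≥ 1` with `x_π(i) ≤ τ_t` for transient states and
`x_π(i) ≥ n / ((1-γ) τ_r)` for recurrent states, for every policy `π`. -/
def Ass1 (M : MDP n m) (τt τr : ℝ) : Prop :=
  1 ≤ τt ∧ 1 ≤ τr ∧
    (∀ π i, M.Transient π i → M.xPol π i ≤ τt) ∧
    (∀ π i, M.Recurrent π i → (n : ℝ) / ((1 - M.γ) * τr) ≤ M.xPol π i)

/-- Assumption 2: the state space is partitioned into a set of states transient for every
policy and a set of states recurrent for every policy. -/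
def Ass2 (M : MDP n m) : Prop :=
  ∃ 𝒯 ℛ : Set (Fin n), 𝒯 ∪ ℛ = Set.univ ∧ 𝒯 ∩ ℛ = ∅ ∧
    ∀ π : Policy n m, (∀ i ∈ 𝒯, M.Transient π i) ∧ (∀ i ∈ ℛ, M.Recurrent π i)

/-- The MDP is deterministic when every transition probability is 0 or 1. -/
def Deterministic (M : MDP n m) : Prop :=
  ∀ i a j, M.p i a j = 0 ∨ M.p i a j = 1

/-- `V_max = (max_π ‖r_π‖_∞) / (1 - γ)`. -/
noncomputable def Vmax (M : MDP n m) : ℝ :=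
  (⨆ π : Policy n m, ‖M.rPol π‖) / (1 - M.γ)

end MDP

namespace MDPAux

open MDP

variable {n m : ℕ}

lemma pol_nonempty (M : MDP n m) : Nonempty (MDP.Policy n m) := by
  have hm : 0 < m := lt_of_lt_of_le two_pos M.m_ge_two
  exact ⟨fun _ => ⟨0, hm⟩⟩

lemma fin_nonempty (M : MDP n m) : Nonempty (Fin n) :=
  ⟨⟨0, lt_of_lt_of_le one_pos M.n_pos⟩⟩

lemma P_apply (M : MDP n m) (π : MDP.Policy n m) (i j : Fin n) :
    M.P π i j = M.p i (π i) j := rfl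

lemma P_nonneg' (M : MDP n m) (π : MDP.Policy n m) (i j : Fin n) : 0 ≤ M.P π i j :=
  M.p_nonneg _ _ _

lemma P_sum' (M : MDP n m) (π : MDP.Policy n m) (i : Fin n) : ∑ j, M.P π i j = 1 := by
  simp only [P_apply]; exact M.p_sum i (π i)

lemma mulVec_le (M : MDP n m) (π : MDP.Policy n m) (y : Fin n → ℝ) (c : ℝ)
    (h : ∀ j, y j ≤ c) (i : Fin n) : (M.P π *ᵥ y) i ≤ c := by
  have h1 : (M.P π *ᵥ y) i ≤ ∑ j, M.P π i j * c := by
    simp only [Matrix.mulVec, dotProduct]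
    exact Finset.sum_le_sum fun j _ => mul_le_mul_of_nonneg_left (h j) (M.p_nonneg _ _ _)
  calc (M.P π *ᵥ y) i ≤ ∑ j, M.P π i j * c := h1
    _ = (∑ j, M.P π i j) * c := by rw [Finset.sum_mul]
    _ = c := by rw [P_sum' M π i]; ring

lemma bellman_unit (M : MDP n m) (π : MDP.Policy n m) :
    IsUnit ((1 : Matrix (Fin n) (Fin n) ℝ) - M.γ • M.P π) := by
  rw [← Matrix.mulVec_injective_iff_isUnit]
  intro u v huv
  by_contra hne
  set z : Fin n → ℝ := u - v with hzdef
  have hz0 : z ≠ 0 := sub_ne_zero.mpr hne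
  have hAz : ∀ i, z i = M.γ * (M.P π *ᵥ z) i := by
    intro i
    have h0 : ((1 : Matrix (Fin n) (Fin n) ℝ) - M.γ • M.P π) *ᵥ z = 0 := by
      rw [hzdef, Matrix.mulVec_sub, huv, sub_self]
    have h1 := congrFun h0 i
    rw [Matrix.sub_mulVec, Matrix.smul_mulVec, Matrix.one_mulVec] at h1
    simp only [Pi.sub_apply, Pi.smul_apply, Pi.zero_apply, smul_eq_mul] at h1
    linarith
  have : Nonempty (Fin n) := fin_nonempty M
  obtain ⟨i0, -, hmax⟩ := Finset.exists_max_image Finset.univ (fun i => |z i|)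
    Finset.univ_nonempty
  have hpos : 0 < |z i0| := by
    obtain ⟨j, hj⟩ := Function.ne_iff.mp hz0
    exact lt_of_lt_of_le (abs_pos.mpr hj) (hmax j (Finset.mem_univ j))
  have hP : |(M.P π *ᵥ z) i0| ≤ |z i0| := by
    have h2 : |(M.P π *ᵥ z) i0| ≤ ∑ j, M.P π i0 j * |z j| := by
      simp only [Matrix.mulVec, dotProduct]
      refine (Finset.abs_sum_le_sum_abs _ _).trans (Finset.sum_le_sum fun j _ => ?_)
      rw [abs_mul, abs_of_nonneg (P_nonneg' M π i0 j)]
    refine h2.trans ?_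
    calc ∑ j, M.P π i0 j * |z j| ≤ ∑ j, M.P π i0 j * |z i0| :=
          Finset.sum_le_sum fun j _ =>
            mul_le_mul_of_nonneg_left (hmax j (Finset.mem_univ j)) (M.p_nonneg _ _ _)
      _ = |z i0| := by rw [← Finset.sum_mul, P_sum' M π i0, one_mul]
  have : |z i0| ≤ M.γ * |z i0| := by
    calc |z i0| = |M.γ * (M.P π *ᵥ z) i0| := by rw [← hAz i0]
      _ = M.γ * |(M.P π *ᵥ z) i0| := by rw [abs_mul, abs_of_pos M.γ_pos]
      _ ≤ M.γ * |z i0| := mul_le_mul_of_nonneg_left hP (le_of_lt M.γ_pos)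
  nlinarith [M.γ_lt_one]

lemma xPol_eq (M : MDP n m) (π : MDP.Policy n m) (j : Fin n) :
    M.xPol π j = 1 + M.γ * ((M.P π)ᵀ *ᵥ M.xPol π) j := by
  have hu : IsUnit ((1 : Matrix (Fin n) (Fin n) ℝ) - M.γ • (M.P π)ᵀ).det := by
    have h1 : (1 : Matrix (Fin n) (Fin n) ℝ) - M.γ • (M.P π)ᵀ =
        ((1 : Matrix (Fin n) (Fin n) ℝ) - M.γ • M.P π)ᵀ := by
      rw [Matrix.transpose_sub, Matrix.transpose_one, Matrix.transpose_smul]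
    rw [h1, Matrix.det_transpose, ← Matrix.isUnit_iff_isUnit_det]
    exact bellman_unit M π
  have hmul := Matrix.mul_nonsing_inv _ hu
  have hx : ((1 : Matrix (Fin n) (Fin n) ℝ) - M.γ • (M.P π)ᵀ) *ᵥ M.xPol π =
      (fun _ => (1 : ℝ)) := by
    unfold MDP.xPol
    rw [Matrix.mulVec_mulVec, hmul, Matrix.one_mulVec]
  have hj := congrFun hx j
  rw [Matrix.sub_mulVec, Matrix.smul_mulVec, Matrix.one_mulVec] at hj
  simp only [Pi.sub_apply, Pi.smul_apply, smul_eq_mul] at hj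
  linarith

lemma diff_rec (M : MDP n m) (V : MDP.Policy n m → Fin n → ℝ) (hV : M.IsValue V)
    (π σ : MDP.Policy n m) (i : Fin n) :
    V σ i - V π i =
      M.γ * (M.P σ *ᵥ (fun j => V σ j - V π j)) i + (M.Tpol σ (V π) i - V π i) := by
  have h1 := congrFun (hV σ) i
  have h2 : (fun j => V σ j - V π j) = V σ - V π := rfl
  rw [h2, Matrix.mulVec_sub]
  simp only [MDP.Tpol, Pi.sub_apply] at h1 ⊢
  linarith

lemma Tpol_le_T (M : MDP n m) (σ : MDP.Policy n m) (v : Fin n → ℝ) (i : Fin n) :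
    M.Tpol σ v i ≤ M.T v i :=
  le_ciSup (Set.Finite.bddAbove (Set.finite_range fun π => M.Tpol π v i)) σ

end MDPAux

/-- under Assumption 1, a Simplex-PI step creating a new recurrent class
contracts `1ᵀ(v_* - v_π)` with coefficient `1 - 1/τ_r`. -/
theorem simplex_recurrent_progress {n m : ℕ} (M : MDP n m)
    (τt τr : ℝ) (h1 : M.Ass1 τt τr)
    (V : MDP.Policy n m → Fin n → ℝ) (hV : M.IsValue V)
    (π π' : MDP.Policy n m) (hπ : ¬ M.IsOptimal V π)
    (hstep : M.SimplexStep V π π')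
    (hnew : ∃ R : Set (Fin n), M.IsRecClass π' R ∧ ¬ M.IsRecClass π R) :
    ∑ i, (M.vStar V i - V π' i) ≤ (1 - 1 / τr) * ∑ i, (M.vStar V i - V π i) := by
  classical
  obtain ⟨s, hagree, hmaxadv, hTs⟩ := hstep
  have hpolne : Nonempty (MDP.Policy n m) := MDPAux.pol_nonempty M
  have hγ1 : (0:ℝ) < 1 - M.γ := by linarith [M.γ_lt_one]
  set a : ℝ := M.T (V π) s - V π s with ha_def
  set d : Fin n → ℝ := fun i => V π' i - V π i with hd_def
  set x : Fin n → ℝ := M.xPol π' with hx_def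
  -- a ≥ 0
  have ha : 0 ≤ a := by
    have h1 : M.Tpol π (V π) s ≤ M.T (V π) s := MDPAux.Tpol_le_T M π (V π) s
    have h2 : V π s = M.Tpol π (V π) s := congrFun (hV π) s
    simp only [ha_def]
    linarith
  -- Step A: advantage of π' over π is a at s, 0 elsewhere
  have hA : ∀ i, M.Tpol π' (V π) i - V π i = if i = s then a else 0 := by
    intro i
    by_cases hi : i = s
    · subst hi; simp [hTs, ha_def]
    · have hpi : π' i = π i := hagree i hi
      have h1 : M.Tpol π' (V π) i = M.Tpol π (V π) i := by
        simp only [MDP.Tpol, MDP.rPol, MDP.P, Matrix.mulVec, dotProduct,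
          Matrix.of_apply, hpi]
      have h2 : V π i = M.Tpol π (V π) i := congrFun (hV π) i
      simp [hi, h1, ← h2]
  -- Step B: d i = γ (P π' d) i + (if i = s then a else 0)
  have hB : ∀ i, d i = M.γ * (M.P π' *ᵥ d) i + (if i = s then a else 0) := by
    intro i
    rw [← hA i]
    exact MDPAux.diff_rec M V hV π π' i
  -- Step C: ∑ d = x s * a
  have hC : ∑ i, d i = x s * a := by
    have hswap : ∑ i, ((M.P π')ᵀ *ᵥ x) i * d i = ∑ j, x j * (M.P π' *ᵥ d) j := by
      simp only [Matrix.mulVec, dotProduct, Matrix.transpose_apply,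
        Finset.sum_mul, Finset.mul_sum]
      rw [Finset.sum_comm]
      exact Finset.sum_congr rfl fun j _ => Finset.sum_congr rfl fun i _ => by ring
    have h1 : ∀ i, (1:ℝ) = x i - M.γ * ((M.P π')ᵀ *ᵥ x) i := by
      intro i; have := MDPAux.xPol_eq M π' i; rw [hx_def]; linarith
    calc ∑ i, d i = ∑ i, (x i - M.γ * ((M.P π')ᵀ *ᵥ x) i) * d i := by
          refine Finset.sum_congr rfl fun i _ => ?_
          rw [← h1 i, one_mul]
      _ = ∑ i, x i * d i - M.γ * ∑ i, ((M.P π')ᵀ *ᵥ x) i * d i := by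
          rw [Finset.mul_sum, ← Finset.sum_sub_distrib]
          exact Finset.sum_congr rfl fun i _ => by ring
      _ = ∑ i, x i * d i - M.γ * ∑ i, x i * (M.P π' *ᵥ d) i := by rw [hswap]
      _ = ∑ i, x i * (d i - M.γ * (M.P π' *ᵥ d) i) := by
          rw [Finset.mul_sum, ← Finset.sum_sub_distrib]
          exact Finset.sum_congr rfl fun i _ => by ring
      _ = ∑ i, x i * (if i = s then a else 0) := by
          refine Finset.sum_congr rfl fun i _ => ?_
          have := hB i; congr 1; linarith
      _ = x s * a := by
          simp only [mul_ite, mul_zero]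
          rw [Finset.sum_ite_eq' Finset.univ s (fun i => x i * a)]
          simp
  -- Step E: vStar - V π ≤ a / (1 - γ) componentwise
  have hE : ∀ i, M.vStar V i - V π i ≤ a / (1 - M.γ) := by
    intro i
    have hub : ∀ σ : MDP.Policy n m, ∀ k, V σ k - V π k ≤ a / (1 - M.γ) := by
      intro σ k
      have : Nonempty (Fin n) := MDPAux.fin_nonempty M
      obtain ⟨i0, -, hmax⟩ := Finset.exists_max_image Finset.univ
        (fun j => V σ j - V π j) Finset.univ_nonempty
      have hmax' : ∀ j, V σ j - V π j ≤ V σ i0 - V π i0 :=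
        fun j => hmax j (Finset.mem_univ j)
      have hrec := MDPAux.diff_rec M V hV π σ i0
      have hPb : (M.P σ *ᵥ (fun j => V σ j - V π j)) i0 ≤ V σ i0 - V π i0 :=
        MDPAux.mulVec_le M σ _ _ hmax' i0
      have hadv : M.Tpol σ (V π) i0 - V π i0 ≤ a := by
        have h1 : M.Tpol σ (V π) i0 ≤ M.T (V π) i0 := MDPAux.Tpol_le_T M σ (V π) i0
        have h2 := hmaxadv i0
        simp only [ha_def]
        linarith
      have hkey : (V σ i0 - V π i0) * (1 - M.γ) ≤ a := by
        nlinarith [M.γ_pos]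
      have h3 : V σ i0 - V π i0 ≤ a / (1 - M.γ) := (le_div_iff₀ hγ1).mpr hkey
      exact (hmax' k).trans h3
    have hsup : M.vStar V i ≤ V π i + a / (1 - M.γ) := by
      refine ciSup_le fun σ => ?_
      linarith [hub σ i]
    linarith
  -- Step F: s belongs to the new recurrent class, so s is recurrent for π'
  obtain ⟨R, hR, hnR⟩ := hnew
  have hsR : s ∈ R := by
    by_contra hs
    apply hnR
    obtain ⟨hne, hcl, hre⟩ := hR
    have hPeq : ∀ i ∈ R, ∀ j, M.P π' i j = M.P π i j := by
      intro i hi j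
      have hpi : π' i = π i := hagree i (fun h => hs (h ▸ hi))
      simp [MDP.P, hpi]
    refine ⟨hne, ?_, ?_⟩
    · intro i hi j hj
      exact hcl i hi j (by rwa [hPeq i hi j])
    · intro i hi j hj
      have htrans := hre i hi j hj
      clear hre hnR
      revert hi
      induction htrans using Relation.ReflTransGen.head_induction_on with
      | refl => intro _; exact Relation.ReflTransGen.refl
      | @head p q hab hbj ih =>
        intro hi
        have hqR : q ∈ R := hcl p hi q hab
        exact Relation.ReflTransGen.head (by rwa [← hPeq p hi q]) (ih hqR)
  have hrecs : M.Recurrent π' s := ⟨R, hR, hsR⟩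
  have hxs : (n : ℝ) / ((1 - M.γ) * τr) ≤ x s := h1.2.2.2 π' s hrecs
  have hτr : (0:ℝ) < τr := lt_of_lt_of_le one_pos h1.2.1
  -- Combine
  set S : ℝ := ∑ i, (M.vStar V i - V π i) with hS_def
  have hSle : S ≤ (n : ℝ) * (a / (1 - M.γ)) := by
    calc S ≤ ∑ _i : Fin n, a / (1 - M.γ) := Finset.sum_le_sum fun i _ => hE i
      _ = (n : ℝ) * (a / (1 - M.γ)) := by
          rw [Finset.sum_const, Finset.card_univ, Fintype.card_fin, nsmul_eq_mul]
  have hxd : ((n : ℝ) / ((1 - M.γ) * τr)) * a ≤ x s * a :=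
    mul_le_mul_of_nonneg_right hxs ha
  have hgoal2 : S / τr ≤ ∑ i, d i := by
    have e1 : ((n : ℝ) * (a / (1 - M.γ))) / τr = ((n : ℝ) / ((1 - M.γ) * τr)) * a := by
      field_simp <;> ring
    calc S / τr ≤ ((n : ℝ) * (a / (1 - M.γ))) / τr := by gcongr
      _ = ((n : ℝ) / ((1 - M.γ) * τr)) * a := e1
      _ ≤ x s * a := hxd
      _ = ∑ i, d i := hC.symm
  have hsplit : ∑ i, (M.vStar V i - V π' i) = S - ∑ i, d i := by
    rw [hS_def, ← Finset.sum_sub_distrib]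
    exact Finset.sum_congr rfl fun i _ => by simp only [hd_def]; ring
  rw [hsplit]
  have hfin : (1 - 1 / τr) * S = S - S / τr := by field_simp <;> ring
  rw [hfin]
  linarith
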